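/- arXiv:1302.4521 — 7 statements merged into one kernel-verified Lean document; each statement's English description precedes it below -/
import Mathlib

section
/- Let f : X → X and g : Y → Y be endomorphisms in a symmetric monoidal category with g ⊗-balanced. If id_X ⊗ f ⊗ g = f ⊗ id_X ⊗ g as endomorphisms of X ⊗ X ⊗ Y (modulo the canonical associativity isomorphisms), then f ⊗ g is a ⊗-balanced endomorphism of X ⊗ Y. -/
open CategoryTheory Category MonoidalCategory

universe v u

/-- An endomorphism `f : X ⟶ X` in a monoidal category is `⊗`-balanced if
`f ⊗ id_X = id_X ⊗ f` as endomorphisms of `X ⊗ X`. -/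
def TensorBalanced {C : Type u} [Category.{v} C] [MonoidalCategory C]
    {X : C} (f : X ⟶ X) : Prop :=
  f ▷ X = X ◁ f

/-- If `g` is ⊗-balanced and `id_X ⊗ f ⊗ g = f ⊗ id_X ⊗ g` as endomorphisms of
`X ⊗ X ⊗ Y`, then `f ⊗ g` is a ⊗-balanced endomorphism of `X ⊗ Y`. -/
theorem tensorBalanced_tensorHom
    {C : Type u} [Category.{v} C] [MonoidalCategory C] [SymmetricCategory C]
    {X Y : C} (f : X ⟶ X) (g : Y ⟶ Y) (hg : TensorBalanced g)
    (h : X ◁ (f ⊗ₘ g) = f ⊗ₘ (X ◁ g)) :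
    TensorBalanced (f ⊗ₘ g) := by
  unfold TensorBalanced at hg ⊢
  have nat : ∀ (v : X ⊗ X ⟶ X ⊗ X) (g' : Y ⟶ Y),
      (v ⊗ₘ g') ▷ Y ≫ (α_ (X⊗X) Y Y).hom = (α_ (X⊗X) Y Y).hom ≫ (v ⊗ₘ g' ▷ Y) := fun v g' => by
    simpa using associator_naturality v g' (𝟙 Y)
  have hL : (f ⊗ₘ X ◁ g) ≫ (α_ X X Y).inv = (α_ X X Y).inv ≫ (f ▷ X ⊗ₘ g) := by
    simpa using associator_inv_naturality f (𝟙 X) g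
  have hR : (X ◁ (f ⊗ₘ g)) ≫ (α_ X X Y).inv = (α_ X X Y).inv ≫ (X ◁ f ⊗ₘ g) := by
    simpa using associator_inv_naturality (𝟙 X) f g
  have key : f ▷ X ⊗ₘ g ▷ Y = X ◁ f ⊗ₘ Y ◁ g := by
    rw [← hg]
    have h2 : ((α_ X X Y).inv ▷ Y ≫ (α_ (X⊗X) Y Y).hom) ≫ (f ▷ X ⊗ₘ g ▷ Y)
            = ((α_ X X Y).inv ▷ Y ≫ (α_ (X⊗X) Y Y).hom) ≫ (X ◁ f ⊗ₘ g ▷ Y) := by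
      calc ((α_ X X Y).inv ▷ Y ≫ (α_ (X⊗X) Y Y).hom) ≫ (f ▷ X ⊗ₘ g ▷ Y)
          = (f ⊗ₘ X ◁ g) ▷ Y ≫ (α_ X X Y).inv ▷ Y ≫ (α_ (X⊗X) Y Y).hom := by
            conv_rhs => rw [← comp_whiskerRight_assoc, hL, comp_whiskerRight_assoc, nat]
            simp only [assoc]
        _ = (X ◁ (f ⊗ₘ g)) ▷ Y ≫ (α_ X X Y).inv ▷ Y ≫ (α_ (X⊗X) Y Y).hom := by rw [h]
        _ = ((α_ X X Y).inv ▷ Y ≫ (α_ (X⊗X) Y Y).hom) ≫ (X ◁ f ⊗ₘ g ▷ Y) := by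
            rw [← comp_whiskerRight_assoc, hR, comp_whiskerRight_assoc, nat]
            simp only [assoc]
    exact (cancel_epi ((α_ X X Y).inv ▷ Y ≫ (α_ (X⊗X) Y Y).hom)).mp h2
  have hiso : IsIso (tensorμ X Y X Y) :=
    ⟨tensorδ X Y X Y, tensorμ_tensorδ X Y X Y, tensorδ_tensorμ X Y X Y⟩
  have h3 : (f ⊗ₘ g) ▷ (X ⊗ Y) ≫ tensorμ X Y X Y = (X ⊗ Y) ◁ (f ⊗ₘ g) ≫ tensorμ X Y X Y := by
    rw [tensorμ_natural_left, tensorμ_natural_right, key]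
  exact (cancel_mono (tensorμ X Y X Y)).mp h3
end

section
/- Let X and Y be objects of a symmetric monoidal category. If f : X → X is ⊗-balanced, then f ⊗ id_Y is a ⊗-balanced endomorphism of X ⊗ Y. Similarly, if g : Y → Y is ⊗-balanced, then id_X ⊗ g is a ⊗-balanced endomorphism of X ⊗ Y. In particular, – ⊗ Y and X ⊗ – induce ring homomorphisms E_X → E_{X⊗Y} and E_Y → E_{X⊗Y}. -/
open CategoryTheory Category MonoidalCategory

universe v u

section Aux

variable {C : Type u} [Category.{v} C] [MonoidalCategory C] [SymmetricCategory C]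

/-- The middle shuffle `Y ⊗ (X ⊗ Y) ⟶ X ⊗ (Y ⊗ Y)`. -/
def shuffleInner (X Y : C) : Y ⊗ (X ⊗ Y) ⟶ X ⊗ (Y ⊗ Y) :=
  (α_ Y X Y).inv ≫ (β_ Y X).hom ▷ Y ≫ (α_ X Y Y).hom

/-- The shuffle iso `(X⊗Y)⊗(X⊗Y) ≅ (X⊗X)⊗(Y⊗Y)`. -/
def shuffleIso (X Y : C) : (X ⊗ Y) ⊗ (X ⊗ Y) ≅ (X ⊗ X) ⊗ (Y ⊗ Y) :=
  α_ X Y (X ⊗ Y) ≪≫ whiskerLeftIso X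
    ((α_ Y X Y).symm ≪≫ whiskerRightIso (β_ Y X) Y ≪≫ α_ X Y Y)
    ≪≫ (α_ X X (Y ⊗ Y)).symm

lemma shuffleIso_hom (X Y : C) :
    (shuffleIso X Y).hom
      = (α_ X Y (X ⊗ Y)).hom ≫ X ◁ shuffleInner X Y ≫ (α_ X X (Y ⊗ Y)).inv := by
  simp [shuffleIso, shuffleInner]

lemma core2 (X Y : C) (f : X ⟶ X) :
    Y ◁ (f ▷ Y) ≫ shuffleInner X Y = shuffleInner X Y ≫ f ▷ (Y ⊗ Y) := by
  simp only [shuffleInner]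
  rw [associator_inv_naturality_middle_assoc,
    ← comp_whiskerRight_assoc, BraidedCategory.braiding_naturality_right,
    comp_whiskerRight_assoc, assoc, assoc, associator_naturality_left]

lemma core3 (X Y : C) (g : Y ⟶ Y) :
    g ▷ (X ⊗ Y) ≫ shuffleInner X Y = shuffleInner X Y ≫ X ◁ (g ▷ Y) := by
  simp only [shuffleInner]
  rw [associator_inv_naturality_left_assoc,
    ← comp_whiskerRight_assoc, BraidedCategory.braiding_naturality_left,
    comp_whiskerRight_assoc, assoc, assoc, associator_naturality_middle]

lemma core4 (X Y : C) (g : Y ⟶ Y) :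
    Y ◁ (X ◁ g) ≫ shuffleInner X Y = shuffleInner X Y ≫ X ◁ (Y ◁ g) := by
  simp only [shuffleInner]
  rw [associator_inv_naturality_right_assoc, whisker_exchange_assoc,
    assoc, assoc, associator_naturality_right]

lemma conj1 (X Y : C) (f : X ⟶ X) :
    (f ▷ Y) ▷ (X ⊗ Y) ≫ (shuffleIso X Y).hom
      = (shuffleIso X Y).hom ≫ (f ▷ X) ▷ (Y ⊗ Y) := by
  rw [shuffleIso_hom, associator_naturality_left_assoc, ← whisker_exchange_assoc,
    associator_inv_naturality_left, assoc, assoc]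

lemma conj2 (X Y : C) (f : X ⟶ X) :
    (X ⊗ Y) ◁ (f ▷ Y) ≫ (shuffleIso X Y).hom
      = (shuffleIso X Y).hom ≫ (X ◁ f) ▷ (Y ⊗ Y) := by
  rw [shuffleIso_hom, associator_naturality_right_assoc,
    ← MonoidalCategory.whiskerLeft_comp_assoc, core2,
    MonoidalCategory.whiskerLeft_comp_assoc, associator_inv_naturality_middle,
    assoc, assoc]

lemma conj3 (X Y : C) (g : Y ⟶ Y) :
    (X ◁ g) ▷ (X ⊗ Y) ≫ (shuffleIso X Y).hom
      = (shuffleIso X Y).hom ≫ (X ⊗ X) ◁ (g ▷ Y) := by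
  rw [shuffleIso_hom, associator_naturality_middle_assoc,
    ← MonoidalCategory.whiskerLeft_comp_assoc, core3,
    MonoidalCategory.whiskerLeft_comp_assoc, associator_inv_naturality_right,
    assoc, assoc]

lemma conj4 (X Y : C) (g : Y ⟶ Y) :
    (X ⊗ Y) ◁ (X ◁ g) ≫ (shuffleIso X Y).hom
      = (shuffleIso X Y).hom ≫ (X ⊗ X) ◁ (Y ◁ g) := by
  rw [shuffleIso_hom, associator_naturality_right_assoc,
    ← MonoidalCategory.whiskerLeft_comp_assoc, core4,
    MonoidalCategory.whiskerLeft_comp_assoc, associator_inv_naturality_right,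
    assoc, assoc]

end Aux

/-- If `f : X ⟶ X` is ⊗-balanced then `f ⊗ id_Y` is a ⊗-balanced endomorphism of
`X ⊗ Y`; similarly if `g : Y ⟶ Y` is ⊗-balanced then `id_X ⊗ g` is ⊗-balanced.
In particular `– ⊗ Y` and `X ⊗ –` induce ring homomorphisms
`E_X → E_{X ⊗ Y}` and `E_Y → E_{X ⊗ Y}`. -/
theorem tensorBalanced_whisker
    {C : Type u} [Category.{v} C] [Preadditive C]
    [MonoidalCategory C] [SymmetricCategory C] [MonoidalPreadditive C]
    (X Y : C) :
    (∀ f : X ⟶ X, TensorBalanced f → TensorBalanced (f ▷ Y)) ∧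
    (∀ g : Y ⟶ Y, TensorBalanced g → TensorBalanced (X ◁ g)) ∧
    (∃ φ : End X →+* End (X ⊗ Y), ∀ f : End X, φ f = (f : X ⟶ X) ▷ Y) ∧
    (∃ ψ : End Y →+* End (X ⊗ Y), ∀ g : End Y, ψ g = X ◁ (g : Y ⟶ Y)) := by
  refine ⟨fun f hf => ?_, fun g hg => ?_, ?_, ?_⟩
  · rw [TensorBalanced, ← cancel_mono (shuffleIso X Y).hom, conj1, conj2, hf]
  · rw [TensorBalanced, ← cancel_mono (shuffleIso X Y).hom, conj3, conj4, hg]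
  · exact ⟨{ toFun := fun f => (f : X ⟶ X) ▷ Y
             map_one' := MonoidalCategory.id_whiskerRight X Y
             map_mul' := fun f g => by
               simp [End.mul_def, MonoidalCategory.comp_whiskerRight]
             map_zero' := MonoidalPreadditive.zero_whiskerRight
             map_add' := fun f g => MonoidalPreadditive.add_whiskerRight f g },
           fun f => rfl⟩
  · exact ⟨{ toFun := fun g => X ◁ (g : Y ⟶ Y)
             map_one' := MonoidalCategory.whiskerLeft_id X Y
             map_mul' := fun f g => by
               simp [End.mul_def, MonoidalCategory.whiskerLeft_comp]
             map_zero' := MonoidalPreadditive.whiskerLeft_zero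
             map_add' := fun f g => MonoidalPreadditive.whiskerLeft_add f g },
           fun g => rfl⟩
end

section
/- Let α : X ≅ Y be an isomorphism in a symmetric monoidal category. Then the map α_* : f ↦ α ∘ f ∘ α⁻¹ sends ⊗-balanced endomorphisms of X to ⊗-balanced endomorphisms of Y (and is a ring isomorphism E_X ≅ E_Y). Moreover, if f is a ⊗-balanced endomorphism of X, then f ⊗ id_Y = id_X ⊗ α_*(f) as endomorphisms of X ⊗ Y. -/
open CategoryTheory Category MonoidalCategory

universe v u

/-- For an isomorphism `α : X ≅ Y`, conjugation `f ↦ α ∘ f ∘ α⁻¹` sends ⊗-balanced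
endomorphisms of `X` to ⊗-balanced endomorphisms of `Y` (and is a ring isomorphism
`E_X ≅ E_Y`); moreover for ⊗-balanced `f` one has `f ⊗ id_Y = id_X ⊗ α_*(f)`. -/
theorem tensorBalanced_conj
    {C : Type u} [Category.{v} C] [Preadditive C]
    [MonoidalCategory C] [SymmetricCategory C] [MonoidalPreadditive C]
    {X Y : C} (α : X ≅ Y) :
    (∀ f : X ⟶ X, TensorBalanced f → TensorBalanced (α.inv ≫ f ≫ α.hom)) ∧
    (∃ e : End X ≃+* End Y, ∀ f : End X, e f = α.inv ≫ (f : X ⟶ X) ≫ α.hom) ∧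
    (∀ f : X ⟶ X, TensorBalanced f → f ▷ Y = X ◁ (α.inv ≫ f ≫ α.hom)) := by
  have key : ∀ f : X ⟶ X, TensorBalanced f → f ▷ Y = X ◁ (α.inv ≫ f ≫ α.hom) := by
    intro f hf
    have : X ◁ (α.inv ≫ f ≫ α.hom) = X ◁ α.inv ≫ X ◁ f ≫ X ◁ α.hom := by
      simp
    rw [this, ← hf, ← whisker_exchange]
    simp
  refine ⟨?_, ?_, key⟩
  · intro f hf
    unfold TensorBalanced
    have h3 := key f hf
    calc (α.inv ≫ f ≫ α.hom) ▷ Y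
        = α.inv ▷ Y ≫ f ▷ Y ≫ α.hom ▷ Y := by simp
      _ = α.inv ▷ Y ≫ X ◁ (α.inv ≫ f ≫ α.hom) ≫ α.hom ▷ Y := by rw [h3]
      _ = α.inv ▷ Y ≫ α.hom ▷ Y ≫ Y ◁ (α.inv ≫ f ≫ α.hom) := by
          rw [whisker_exchange]
      _ = Y ◁ (α.inv ≫ f ≫ α.hom) := by
          rw [← assoc, ← comp_whiskerRight]; simp
  · refine ⟨{ α.conj with map_add' := ?_ }, fun f => rfl⟩
    intro f g
    show α.inv ≫ (f + g) ≫ α.hom = (α.inv ≫ f ≫ α.hom) + (α.inv ≫ g ≫ α.hom)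
    rw [Preadditive.add_comp, Preadditive.comp_add]
end

section
/- If f : X → X is a ⊗-balanced endomorphism in a symmetric monoidal category, then for every object c one has f ⊗ id_c ⊗ id_X = id_X ⊗ id_c ⊗ f as endomorphisms of X ⊗ c ⊗ X (modulo the canonical associativity isomorphisms). -/
open CategoryTheory Category MonoidalCategory

universe v u

/-- If `f : X ⟶ X` is ⊗-balanced then for every object `c`,
`f ⊗ id_c ⊗ id_X = id_X ⊗ id_c ⊗ f` as endomorphisms of `X ⊗ c ⊗ X`. -/
theorem tensorBalanced_middle
    {C : Type u} [Category.{v} C] [MonoidalCategory C] [SymmetricCategory C]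
    {X : C} (f : X ⟶ X) (hf : TensorBalanced f) (c : C) :
    f ▷ (c ⊗ X) = X ◁ (c ◁ f) := by
  have h1 : f ▷ (X ⊗ c) = X ◁ (f ▷ c) := by
    rw [whiskerRight_tensor, hf, whisker_assoc]
    simp
  have h2 : f ▷ (c ⊗ X) = (X ◁ (β_ c X).hom) ≫ f ▷ (X ⊗ c) ≫ (X ◁ (β_ c X).inv) := by
    rw [whisker_exchange_assoc]
    simp
  rw [h2, h1, ← MonoidalCategory.whiskerLeft_comp, ← MonoidalCategory.whiskerLeft_comp]
  congr 1
  rw [← BraidedCategory.braiding_naturality_right_assoc]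
  simp
end

section
/- Let a₁, …, aₙ be objects of an additive symmetric monoidal category with biproducts, and let f : a₁ ⊕ ⋯ ⊕ aₙ → a₁ ⊕ ⋯ ⊕ aₙ be an endomorphism of the biproduct with matrix components f_ij : a_j → a_i. Then f is ⊗-balanced if and only if: (1) id_{a_i} ⊗ f_jj = f_ii ⊗ id_{a_j} as endomorphisms of a_i ⊗ a_j for all i, j, and (2) f_ij ⊗ id_{a₁ ⊕ ⋯ ⊕ aₙ} = 0 whenever i ≠ j. -/
open CategoryTheory Category Limits MonoidalCategory

universe v u

set_option linter.unusedSectionVars false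

section
variable {C : Type u} [Category.{v} C] [Preadditive C] [HasFiniteBiproducts C]
  [MonoidalCategory C] [MonoidalPreadditive C] {n : ℕ} (a : Fin n → C)

lemma TB_totR (Y : C) : ∑ i, (biproduct.π a i ▷ Y) ≫ (biproduct.ι a i ▷ Y) = 𝟙 ((⨁ a) ⊗ Y) := by
  simp only [← comp_whiskerRight, ← sum_whiskerRight, biproduct.total, id_whiskerRight]

lemma TB_totL (Y : C) : ∑ i, (Y ◁ biproduct.π a i) ≫ (Y ◁ biproduct.ι a i) = 𝟙 (Y ⊗ (⨁ a)) := by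
  simp only [← MonoidalCategory.whiskerLeft_comp, ← whiskerLeft_sum, biproduct.total,
    MonoidalCategory.whiskerLeft_id]

lemma TB_extR {Y Z : C} {g h : (⨁ a) ⊗ Y ⟶ Z}
    (H : ∀ i, (biproduct.ι a i ▷ Y) ≫ g = (biproduct.ι a i ▷ Y) ≫ h) : g = h := by
  rw [← id_comp g, ← id_comp h, ← TB_totR a Y, Preadditive.sum_comp, Preadditive.sum_comp]
  exact Finset.sum_congr rfl fun i _ => by rw [assoc, assoc, H]

lemma TB_extL {Y Z : C} {g h : Y ⊗ (⨁ a) ⟶ Z}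
    (H : ∀ i, (Y ◁ biproduct.ι a i) ≫ g = (Y ◁ biproduct.ι a i) ≫ h) : g = h := by
  rw [← id_comp g, ← id_comp h, ← TB_totL a Y, Preadditive.sum_comp, Preadditive.sum_comp]
  exact Finset.sum_congr rfl fun i _ => by rw [assoc, assoc, H]

lemma TB_monoR {Y Z : C} {g h : Z ⟶ (⨁ a) ⊗ Y}
    (H : ∀ i, g ≫ (biproduct.π a i ▷ Y) = h ≫ (biproduct.π a i ▷ Y)) : g = h := by
  rw [← comp_id g, ← comp_id h, ← TB_totR a Y, Preadditive.comp_sum, Preadditive.comp_sum]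
  exact Finset.sum_congr rfl fun i _ => by rw [← assoc, ← assoc, H]

lemma TB_monoL {Y Z : C} {g h : Z ⟶ Y ⊗ (⨁ a)}
    (H : ∀ i, g ≫ (Y ◁ biproduct.π a i) = h ≫ (Y ◁ biproduct.π a i)) : g = h := by
  rw [← comp_id g, ← comp_id h, ← TB_totL a Y, Preadditive.comp_sum, Preadditive.comp_sum]
  exact Finset.sum_congr rfl fun i _ => by rw [← assoc, ← assoc, H]

variable (f : (⨁ a) ⟶ (⨁ a))

lemma TB_compR (i j k l : Fin n) :
    (a i ◁ biproduct.ι a j) ≫ (biproduct.ι a i ▷ (⨁ a)) ≫ (f ▷ (⨁ a)) ≫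
      (biproduct.π a k ▷ (⨁ a)) ≫ (a k ◁ biproduct.π a l)
    = ((biproduct.ι a i ≫ f ≫ biproduct.π a k) ▷ a j) ≫
        (a k ◁ (biproduct.ι a j ≫ biproduct.π a l)) := by
  slice_lhs 2 4 => rw [← comp_whiskerRight, ← comp_whiskerRight]
  rw [whisker_exchange_assoc, ← MonoidalCategory.whiskerLeft_comp]

lemma TB_compL (i j k l : Fin n) :
    (a i ◁ biproduct.ι a j) ≫ (biproduct.ι a i ▷ (⨁ a)) ≫ ((⨁ a) ◁ f) ≫
      (biproduct.π a k ▷ (⨁ a)) ≫ (a k ◁ biproduct.π a l)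
    = ((biproduct.ι a i ≫ biproduct.π a k) ▷ a j) ≫
        (a k ◁ (biproduct.ι a j ≫ f ≫ biproduct.π a l)) := by
  rw [whisker_exchange_assoc]
  slice_lhs 2 3 => rw [← MonoidalCategory.whiskerLeft_comp]
  simp only [Category.assoc]
  rw [whisker_exchange_assoc]
  slice_lhs 1 2 => rw [← comp_whiskerRight]
  slice_lhs 2 3 => rw [← MonoidalCategory.whiskerLeft_comp]
  simp only [Category.assoc]

lemma TB_keyIff :
    (f ▷ (⨁ a) = (⨁ a) ◁ f) ↔ ∀ i j k l : Fin n,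
      ((biproduct.ι a i ≫ f ≫ biproduct.π a k) ▷ a j) ≫
          (a k ◁ (biproduct.ι a j ≫ biproduct.π a l)) =
        ((biproduct.ι a i ≫ biproduct.π a k) ▷ a j) ≫
          (a k ◁ (biproduct.ι a j ≫ f ≫ biproduct.π a l)) := by
  constructor
  · intro h i j k l
    rw [← TB_compR a f i j k l, ← TB_compL a f i j k l, h]
  · intro H
    apply TB_extR a; intro i
    apply TB_extL a; intro j
    apply TB_monoR a; intro k
    apply TB_monoL a; intro l
    simp only [Category.assoc]
    rw [TB_compR a f i j k l, TB_compL a f i j k l]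
    exact H i j k l

end

theorem TB_main
    {C : Type u} [Category.{v} C] [Preadditive C] [HasFiniteBiproducts C]
    [MonoidalCategory C] [SymmetricCategory C] [MonoidalPreadditive C]
    {n : ℕ} (a : Fin n → C) (f : (⨁ a) ⟶ (⨁ a)) :
    (f ▷ (⨁ a) = (⨁ a) ◁ f) ↔
      ((∀ i j : Fin n,
          (a i) ◁ (biproduct.ι a j ≫ f ≫ biproduct.π a j) =
            (biproduct.ι a i ≫ f ≫ biproduct.π a i) ▷ (a j)) ∧
        (∀ i j : Fin n, i ≠ j →
          (biproduct.ι a j ≫ f ≫ biproduct.π a i) ▷ (⨁ a) = 0)) := by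
  rw [TB_keyIff a f]
  constructor
  · intro H
    constructor
    · intro i j
      have h := H i j i j
      simp only [biproduct.ι_π_self, MonoidalCategory.whiskerLeft_id, comp_id,
        id_whiskerRight, id_comp] at h
      exact h.symm
    · intro i j hij
      have hcomp : ∀ l, (biproduct.ι a j ≫ f ≫ biproduct.π a i) ▷ a l = 0 := by
        intro l
        have h := H j l i l
        simp only [biproduct.ι_π_self, MonoidalCategory.whiskerLeft_id, comp_id,
          biproduct.ι_π_ne a (Ne.symm hij), MonoidalPreadditive.zero_whiskerRight, zero_comp] at h
        exact h
      apply TB_monoL a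
      intro l
      rw [zero_comp, ← whisker_exchange, hcomp l, comp_zero]
  · rintro ⟨h1, h2⟩ i j k l
    have hw : ∀ p q r : Fin n, p ≠ q → (biproduct.ι a q ≫ f ≫ biproduct.π a p) ▷ a r = 0 := by
      intro p q r hpq
      have e : (biproduct.ι a q ≫ f ≫ biproduct.π a p) ▷ a r
          = (a q ◁ biproduct.ι a r) ≫
              ((biproduct.ι a q ≫ f ≫ biproduct.π a p) ▷ (⨁ a)) ≫ (a p ◁ biproduct.π a r) := by
        rw [whisker_exchange_assoc, ← MonoidalCategory.whiskerLeft_comp,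
          biproduct.ι_π_self, MonoidalCategory.whiskerLeft_id, comp_id]
      rw [e, h2 p q hpq, zero_comp, comp_zero]
    by_cases hik : i = k
    · subst hik
      by_cases hjl : j = l
      · subst hjl
        simp only [biproduct.ι_π_self, MonoidalCategory.whiskerLeft_id, comp_id,
          id_whiskerRight, id_comp]
        exact (h1 i j).symm
      · have h0 : (biproduct.ι a j ≫ f ≫ biproduct.π a l) ▷ a i = 0 := hw l j i (Ne.symm hjl)
        have hlz : a i ◁ (biproduct.ι a j ≫ f ≫ biproduct.π a l) = 0 := by
          rw [← cancel_mono ((β_ (a i) (a l)).hom),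
            BraidedCategory.braiding_naturality_right, h0, comp_zero, zero_comp]
        rw [biproduct.ι_π_ne a hjl, MonoidalPreadditive.whiskerLeft_zero, comp_zero, hlz, comp_zero]
    · rw [hw k i j (Ne.symm hik), zero_comp, biproduct.ι_π_ne a hik,
        MonoidalPreadditive.zero_whiskerRight, zero_comp]

/-- An endomorphism `f` of a biproduct `a₁ ⊕ ⋯ ⊕ aₙ`, with matrix components
`f_ij = ι_j ≫ f ≫ π_i : a_j ⟶ a_i`, is ⊗-balanced if and only if
(1) `id_{a_i} ⊗ f_jj = f_ii ⊗ id_{a_j}` for all `i, j`, and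
(2) `f_ij ⊗ id = 0` whenever `i ≠ j`. -/
theorem tensorBalanced_biproduct_iff
    {C : Type u} [Category.{v} C] [Preadditive C] [HasFiniteBiproducts C]
    [MonoidalCategory C] [SymmetricCategory C] [MonoidalPreadditive C]
    {n : ℕ} (a : Fin n → C) (f : (⨁ a) ⟶ (⨁ a)) :
    TensorBalanced f ↔
      ((∀ i j : Fin n,
          (a i) ◁ (biproduct.ι a j ≫ f ≫ biproduct.π a j) =
            (biproduct.ι a i ≫ f ≫ biproduct.π a i) ▷ (a j)) ∧
        (∀ i j : Fin n, i ≠ j →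
          (biproduct.ι a j ≫ f ≫ biproduct.π a i) ▷ (⨁ a) = 0)) :=
  TB_main a f
end

section
/- Let f : a → b and g : c → d be morphisms in a tensor triangulated category, and let a →f b → Z → Σa be a distinguished triangle. If id_Z ⊗ g = 0 as a morphism Z ⊗ c → Z ⊗ d, then there exists a morphism u : b ⊗ c → a ⊗ d such that id_a ⊗ g = u ∘ (f ⊗ id_c), and there exists a morphism v : b ⊗ c → a ⊗ d such that id_b ⊗ g = (f ⊗ id_d) ∘ v. -/
open CategoryTheory Category Limits Pretriangulated MonoidalCategory

universe v u

section Aux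

variable {C : Type u} [Category.{v} C] [MonoidalCategory C]

/-- If `Y ◁ g = 0` and `X ≅ Y`, then `X ◁ g = 0`. -/
lemma aux_whiskerLeft_eq_zero_of_iso [Preadditive C] {c d : C} (g : c ⟶ d) {X Y : C}
    (φ : X ≅ Y) (h : Y ◁ g = 0) : X ◁ g = 0 := by
  have hw := whisker_exchange φ.hom g
  rw [h, comp_zero] at hw
  have : IsIso (φ.hom ▷ d) := inferInstance
  rw [← cancel_mono (φ.hom ▷ d), hw, zero_comp]

end Aux

/-- Let `a →f b → Z → Σa` be a distinguished triangle and `g : c ⟶ d` a morphism with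
`id_Z ⊗ g = 0`. Then `id_a ⊗ g` factors through `f ⊗ id_c`, and `id_b ⊗ g` factors
through `f ⊗ id_d`. -/
theorem exists_factorization_of_whiskerLeft_cone_eq_zero
    {C : Type u} [Category.{v} C] [Preadditive C] [HasZeroObject C]
    [HasShift C ℤ] [∀ n : ℤ, (shiftFunctor C n).Additive] [Pretriangulated C]
    [MonoidalCategory C] [SymmetricCategory C] [MonoidalPreadditive C]
    [∀ a : C, (tensorLeft a).CommShift ℤ] [∀ a : C, (tensorLeft a).IsTriangulated]
    [∀ a : C, (tensorRight a).CommShift ℤ] [∀ a : C, (tensorRight a).IsTriangulated]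
    {a b c d Z : C} (f : a ⟶ b) (g : c ⟶ d)
    (u' : b ⟶ Z) (w : Z ⟶ a⟦(1 : ℤ)⟧)
    (hT : Triangle.mk f u' w ∈ (distTriang C))
    (hg : Z ◁ g = 0) :
    (∃ u : b ⊗ c ⟶ a ⊗ d, a ◁ g = (f ▷ c) ≫ u) ∧
    (∃ v : b ⊗ c ⟶ a ⊗ d, b ◁ g = v ≫ (f ▷ d)) := by
  -- Step 1: `(X ⊗ Z) ◁ g = 0` for every `X`, by the associator.
  have h1 : ∀ X : C, (X ⊗ Z) ◁ g = 0 := by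
    intro X
    rw [tensor_whiskerLeft, hg, MonoidalPreadditive.whiskerLeft_zero, zero_comp, comp_zero]
  -- Step 2: `(Z ⊗ X) ◁ g = 0` for every `X`, by the braiding.
  have h2 : ∀ X : C, (Z ⊗ X) ◁ g = 0 := fun X =>
    aux_whiskerLeft_eq_zero_of_iso g (β_ Z X) (h1 X)
  -- Step 3: `Z⟦-1⟧ ≅ Z ⊗ (𝟙_C)⟦-1⟧` using the commutation of `tensorLeft Z` with shifts,
  -- hence `Z⟦-1⟧ ◁ g = 0`.
  have φ : (Z⟦(-1 : ℤ)⟧) ≅ Z ⊗ ((𝟙_ C)⟦(-1 : ℤ)⟧) :=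
    (shiftFunctor C (-1 : ℤ)).mapIso (ρ_ Z).symm ≪≫
      (((tensorLeft Z).commShiftIso (-1 : ℤ)).app (𝟙_ C)).symm
  have hZm : (Z⟦(-1 : ℤ)⟧) ◁ g = 0 :=
    aux_whiskerLeft_eq_zero_of_iso g φ (h2 _)
  constructor
  · -- Part 1: tensor the inverse rotation `Z⟦-1⟧ → a → b` of the triangle with `c`
    -- and use exactness of the corresponding covariant Hom sequence.
    have hT0 := inv_rot_of_distTriang _ hT
    have hS := (tensorRight c).map_distinguished _ hT0
    have hf : ((tensorRight c).mapTriangle.obj (Triangle.mk f u' w).invRotate).mor₁ ≫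
        (a ◁ g : a ⊗ c ⟶ a ⊗ d) = 0 := by
      change ((Triangle.mk f u' w).invRotate.mor₁ ▷ c) ≫ (a ◁ g) = 0
      exact (whisker_exchange (W := Z⟦(-1 : ℤ)⟧) (X := a)
        (Triangle.mk f u' w).invRotate.mor₁ g).symm.trans (by rw [hZm, zero_comp]; rfl)
    obtain ⟨ψ, hψ⟩ := Triangle.yoneda_exact₂ _ hS (a ◁ g) hf
    refine ⟨ψ, ?_⟩
    exact hψ
  · -- Part 2: tensor the triangle with `d` and lift `b ◁ g` through `f ▷ d`.
    have hT2 := (tensorRight d).map_distinguished _ hT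
    have hf : (b ◁ g : b ⊗ c ⟶ b ⊗ d) ≫
        ((tensorRight d).mapTriangle.obj (Triangle.mk f u' w)).mor₂ = 0 := by
      change (b ◁ g) ≫ (u' ▷ d) = 0
      rw [whisker_exchange, hg, comp_zero]
    obtain ⟨v, hv⟩ := Triangle.coyoneda_exact₂ _ hT2 (b ◁ g) hf
    refine ⟨v, ?_⟩
    exact hv
end

section
/- Let K be a rigid symmetric monoidal category (every object has a dual), and for a morphism f let f^∨ denote its dual (mate) morphism. If f : X → X is a ⊗-balanced endomorphism, then f^∨ : X^∨ → X^∨ is a ⊗-balanced endomorphism of the dual object X^∨. -/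
open CategoryTheory Category MonoidalCategory

universe v u

/-- If `f` is ⊗-balanced, then `f` on the first strand of `X ⊗ W ⊗ X` agrees with `f` on the
last strand, for any object `W` in between (in a braided category). -/
lemma tensorBalanced_slide {C : Type u} [Category.{v} C] [MonoidalCategory C]
    [BraidedCategory C] {X : C} (f : X ⟶ X) (hf : f ▷ X = X ◁ f) (W : C) :
    (f ▷ W) ▷ X ≫ (α_ X W X).hom = (α_ X W X).hom ≫ X ◁ (W ◁ f) := by
  have h1 : f ▷ W = (β_ X W).hom ≫ W ◁ f ≫ (β_ X W).inv := by
    rw [← BraidedCategory.braiding_naturality_left_assoc, Iso.hom_inv_id, comp_id]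
  have h2 : (W ◁ f) ▷ X = (W ⊗ X) ◁ f := by
    rw [← cancel_mono (α_ W X X).hom, associator_naturality_middle, hf,
      associator_naturality_right]
  rw [h1]
  simp only [comp_whiskerRight, h2, assoc]
  rw [← whisker_exchange_assoc, ← comp_whiskerRight_assoc, Iso.hom_inv_id, id_whiskerRight,
    id_comp, associator_naturality_right]

/-- In a rigid symmetric monoidal category, the dual (mate) of a ⊗-balanced
endomorphism is ⊗-balanced. -/
theorem tensorBalanced_rightAdjointMate
    {C : Type u} [Category.{v} C] [MonoidalCategory C] [SymmetricCategory C]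
    [RigidCategory C]
    {X : C} (f : X ⟶ X) (hf : TensorBalanced f) :
    TensorBalanced (fᘁ) := by
  unfold TensorBalanced at hf ⊢
  apply_fun (tensorLeftHomEquiv (Xᘁ) X (Xᘁ) (Xᘁ ⊗ Xᘁ))
  dsimp [tensorLeftHomEquiv]
  rw [← cancel_mono (α_ X (Xᘁ) (Xᘁ)).inv]
  apply_fun (tensorRightHomEquiv (Xᘁ) X (Xᘁ) (X ⊗ Xᘁ)).symm
  dsimp [tensorRightHomEquiv]
  calc
    _ = 𝟙 (Xᘁ ⊗ X) ⊗≫ (η_ X Xᘁ ≫ X ◁ fᘁ) ▷ (Xᘁ ⊗ X) ⊗≫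
        (X ⊗ Xᘁ) ◁ ε_ X Xᘁ ⊗≫ 𝟙 (X ⊗ Xᘁ) := by
      monoidal
    _ = 𝟙 (Xᘁ ⊗ X) ⊗≫ (η_ X Xᘁ ≫ f ▷ Xᘁ) ▷ (Xᘁ ⊗ X) ⊗≫
        (X ⊗ Xᘁ) ◁ ε_ X Xᘁ ⊗≫ 𝟙 (X ⊗ Xᘁ) := by
      rw [coevaluation_comp_rightAdjointMate]
    _ = 𝟙 (Xᘁ ⊗ X) ⊗≫ η_ X Xᘁ ▷ (Xᘁ ⊗ X) ⊗≫
        ((f ▷ (Xᘁ ⊗ Xᘁ)) ▷ X ≫ (α_ X (Xᘁ ⊗ Xᘁ) X).hom) ⊗≫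
        (X ⊗ Xᘁ) ◁ ε_ X Xᘁ ⊗≫ 𝟙 (X ⊗ Xᘁ) := by
      monoidal
    _ = 𝟙 (Xᘁ ⊗ X) ⊗≫ η_ X Xᘁ ▷ (Xᘁ ⊗ X) ⊗≫
        ((α_ X (Xᘁ ⊗ Xᘁ) X).hom ≫ X ◁ ((Xᘁ ⊗ Xᘁ) ◁ f)) ⊗≫
        (X ⊗ Xᘁ) ◁ ε_ X Xᘁ ⊗≫ 𝟙 (X ⊗ Xᘁ) := by
      rw [tensorBalanced_slide f hf]
    _ = 𝟙 (Xᘁ ⊗ X) ⊗≫ η_ X Xᘁ ▷ (Xᘁ ⊗ X) ⊗≫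
        (X ⊗ Xᘁ) ◁ (fᘁ ▷ X ≫ ε_ X Xᘁ) ⊗≫ 𝟙 (X ⊗ Xᘁ) := by
      rw [rightAdjointMate_comp_evaluation]
      monoidal
    _ = _ := by
      monoidal
end
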